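/- Let G be a bipartite graph with bipartition (X, Y), where X = {x₁, …, x_p} with d(x₁) ≥ d(x₂) ≥ ⋯ ≥ d(x_p), and assume the minimum degree among vertices of X is at least the maximum degree among vertices of Y. Then for any positive integer t ≤ |E(G)|, the minimum size of a set of vertices covering at least t edges of G equals min{k : d(x₁) + ⋯ + d(x_k) ≥ t}. -/

import Mathlib

open Finset

variable {V : Type*}

noncomputable section

/-- The set of edges of `G` covered by the vertex set `S` (i.e. incident with some vertex of `S`). -/
def coveredEdges (G : SimpleGraph V) [Fintype V] [DecidableEq V] [DecidableRel G.Adj]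
    (S : Finset V) : Finset (Sym2 V) :=
  G.edgeFinset.filter (fun e => ∃ v ∈ S, v ∈ e)

/-- `τ` is a valid threshold assignment: `0 ≤ τ v ≤ deg v`. -/
def validThresholds (G : SimpleGraph V) [Fintype V] [DecidableRel G.Adj] (τ : V → ℕ) : Prop :=
  ∀ v, τ v ≤ G.degree v

/-- `M` is a `τ`-static monopoly: every vertex outside `M` has at least `τ v` neighbors in `M`. -/
def isMonopoly (G : SimpleGraph V) [Fintype V] [DecidableEq V] [DecidableRel G.Adj]
    (τ : V → ℕ) (M : Finset V) : Prop :=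
  ∀ v ∉ M, τ v ≤ (G.neighborFinset v ∩ M).card

/-- One activation step: add all vertices with at least `τ v` neighbors among active vertices. -/
def dynStep (G : SimpleGraph V) [Fintype V] [DecidableEq V] [DecidableRel G.Adj]
    (τ : V → ℕ) (A : Finset V) : Finset V :=
  A ∪ Finset.univ.filter (fun v => τ v ≤ (G.neighborFinset v ∩ A).card)

/-- `D` is a `τ`-dynamic monopoly: iterating activation from `D` reaches all vertices. -/
def isDynMonopoly (G : SimpleGraph V) [Fintype V] [DecidableEq V] [DecidableRel G.Adj]
    (τ : V → ℕ) (D : Finset V) : Prop :=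
  ∃ k, (dynStep G τ)^[k] D = Finset.univ

/-- `Pbeta G s`: minimum size of a vertex set covering at least `s` edges of `G`. -/
def Pbeta (G : SimpleGraph V) [Fintype V] [DecidableEq V] [DecidableRel G.Adj] (s : ℕ) : ℕ :=
  sInf {c | ∃ S : Finset V, S.card = c ∧ s ≤ (coveredEdges G S).card}

/-- `Smon G t`: minimum size of a `τ`-static monopoly over all valid `τ` with average at least `t`. -/
def Smon (G : SimpleGraph V) [Fintype V] [DecidableEq V] [DecidableRel G.Adj] (t : ℝ) : ℕ :=
  sInf {c | ∃ (τ : V → ℕ) (M : Finset V), validThresholds G τ ∧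
    (Fintype.card V : ℝ) * t ≤ ∑ v, (τ v : ℝ) ∧ isMonopoly G τ M ∧ M.card = c}

/-- `Sdyn G t`: minimum size of a `τ`-dynamic monopoly over all valid `τ` with average at least `t`. -/
def Sdyn (G : SimpleGraph V) [Fintype V] [DecidableEq V] [DecidableRel G.Adj] (t : ℝ) : ℕ :=
  sInf {c | ∃ (τ : V → ℕ) (D : Finset V), validThresholds G τ ∧
    (Fintype.card V : ℝ) * t ≤ ∑ v, (τ v : ℝ) ∧ isDynMonopoly G τ D ∧ D.card = c}

lemma coveredEdges_eq_biUnion (G : SimpleGraph V) [Fintype V] [DecidableEq V] [DecidableRel G.Adj]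
    (S : Finset V) :
    coveredEdges G S = S.biUnion (fun v => G.incidenceFinset v) := by
  ext e
  simp only [coveredEdges, mem_filter, mem_biUnion, SimpleGraph.mem_incidenceFinset,
    SimpleGraph.incidenceSet, Set.mem_setOf_eq, SimpleGraph.mem_edgeFinset, Set.mem_sep_iff]
  tauto

lemma card_coveredEdges_le (G : SimpleGraph V) [Fintype V] [DecidableEq V] [DecidableRel G.Adj]
    (S : Finset V) : (coveredEdges G S).card ≤ ∑ v ∈ S, G.degree v := by
  rw [coveredEdges_eq_biUnion]
  calc (S.biUnion (fun v => G.incidenceFinset v)).card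
      ≤ ∑ v ∈ S, (G.incidenceFinset v).card := Finset.card_biUnion_le
    _ = ∑ v ∈ S, G.degree v := by
        exact Finset.sum_congr rfl fun v _ => G.card_incidenceFinset_eq_degree v

lemma card_coveredEdges_eq (G : SimpleGraph V) [Fintype V] [DecidableEq V] [DecidableRel G.Adj]
    (S : Finset V) (h : ∀ u ∈ S, ∀ v ∈ S, ¬ G.Adj u v) :
    (coveredEdges G S).card = ∑ v ∈ S, G.degree v := by
  rw [coveredEdges_eq_biUnion, Finset.card_biUnion]
  · exact Finset.sum_congr rfl fun v _ => G.card_incidenceFinset_eq_degree v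
  · intro u hu v hv huv
    show Disjoint (G.incidenceFinset u) (G.incidenceFinset v)
    rw [Finset.disjoint_left]
    intro e heu hev
    rw [SimpleGraph.mem_incidenceFinset] at heu hev
    obtain ⟨heE, hue⟩ := heu
    obtain ⟨_, hve⟩ := hev
    have he : e = s(u, v) := (Sym2.mem_and_mem_iff huv).1 ⟨hue, hve⟩
    rw [he] at heE
    exact h u hu v hv (G.mem_edgeSet.1 heE)

lemma sum_deg_le_aux (G : SimpleGraph V) [Fintype V] [DecidableEq V] [DecidableRel G.Adj]
    (X Y : Finset V) (hunion : X ∪ Y = Finset.univ)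
    (hdeg : ∀ x ∈ X, ∀ y ∈ Y, G.degree y ≤ G.degree x)
    (p : ℕ) (x : Fin p → V)
    (hinj : Function.Injective x) (hXim : X = Finset.image x Finset.univ)
    (hmono : ∀ i j : Fin p, i ≤ j → G.degree (x j) ≤ G.degree (x i)) :
    ∀ c : ℕ, c ≤ p → ∀ S : Finset V, S.card = c →
      ∑ v ∈ S, G.degree v ≤
        ∑ i ∈ Finset.univ.filter (fun i : Fin p => (i : ℕ) < c), G.degree (x i) := by
  intro c
  induction c with
  | zero => intro _ S hS; simp [Finset.card_eq_zero.1 hS]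
  | succ c ih =>
    intro hc S hS
    have hcp : c < p := hc
    have key : ∃ v ∈ S, G.degree v ≤ G.degree (x ⟨c, hcp⟩) := by
      by_cases hXS : ∀ v ∈ S, v ∈ X
      · -- all in X : pick the one with maximal index
        set T : Finset (Fin p) := Finset.univ.filter (fun i => x i ∈ S) with hT
        have hTim : Finset.image x T = S := by
          apply Finset.Subset.antisymm
          · intro v hv
            obtain ⟨i, hi, rfl⟩ := Finset.mem_image.1 hv
            exact (Finset.mem_filter.1 hi).2
          · intro v hv
            have hvX : v ∈ X := hXS v hv
            rw [hXim] at hvX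
            obtain ⟨i, _, rfl⟩ := Finset.mem_image.1 hvX
            exact Finset.mem_image.2 ⟨i, Finset.mem_filter.2 ⟨Finset.mem_univ i, hv⟩, rfl⟩
        have hTcard : T.card = c + 1 := by
          rw [← hS, ← hTim, Finset.card_image_of_injective _ hinj]
        have hTne : T.Nonempty := by rw [← Finset.card_pos, hTcard]; omega
        set i0 := T.max' hTne with hi0
        have hle : c ≤ (i0 : ℕ) := by
          have hsub : T ⊆ Finset.Iic i0 := fun j hj => Finset.mem_Iic.2 (T.le_max' j hj)
          have := Finset.card_le_card hsub
          rw [hTcard, Fin.card_Iic] at this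
          omega
        refine ⟨x i0, (Finset.mem_filter.1 (T.max'_mem hTne)).2, ?_⟩
        exact hmono ⟨c, hcp⟩ i0 (by rw [Fin.le_def]; exact hle)
      · push_neg at hXS
        obtain ⟨v, hvS, hvX⟩ := hXS
        have hvY : v ∈ Y := by
          have := Finset.mem_union.1 (hunion ▸ Finset.mem_univ v)
          tauto
        have : x ⟨c, hcp⟩ ∈ X := by rw [hXim]; exact Finset.mem_image_of_mem x (Finset.mem_univ _)
        exact ⟨v, hvS, hdeg _ this _ hvY⟩
    obtain ⟨v, hvS, hvdeg⟩ := key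
    have hstep : Finset.univ.filter (fun i : Fin p => (i : ℕ) < c + 1)
        = insert ⟨c, hcp⟩ (Finset.univ.filter (fun i : Fin p => (i : ℕ) < c)) := by
      ext i
      simp only [Finset.mem_filter, Finset.mem_univ, true_and, Finset.mem_insert, Fin.ext_iff]
      omega
    rw [hstep, Finset.sum_insert (by simp)]
    have hih := ih (le_of_lt hcp) (S.erase v)
      (by rw [Finset.card_erase_of_mem hvS, hS]; rfl)
    have hsum : ∑ w ∈ S, G.degree w = G.degree v + ∑ w ∈ S.erase v, G.degree w :=
      (Finset.add_sum_erase _ _ hvS).symm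
    omega

theorem stmt2 (G : SimpleGraph V) [Fintype V] [DecidableEq V] [DecidableRel G.Adj]
    (X Y : Finset V) (hdisj : Disjoint X Y) (hunion : X ∪ Y = Finset.univ)
    (hbip : ∀ u v, G.Adj u v → (u ∈ X ∧ v ∈ Y) ∨ (u ∈ Y ∧ v ∈ X))
    (hdeg : ∀ x ∈ X, ∀ y ∈ Y, G.degree y ≤ G.degree x)
    (p : ℕ) (hp : p = X.card) (x : Fin p → V)
    (hinj : Function.Injective x) (hran : ∀ i, x i ∈ X)
    (hmono : ∀ i j : Fin p, i ≤ j → G.degree (x j) ≤ G.degree (x i))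
    (t : ℕ) (ht : 0 < t) (htm : t ≤ G.edgeFinset.card) :
    Pbeta G t =
      sInf {k : ℕ |
        t ≤ ∑ i ∈ Finset.univ.filter (fun i : Fin p => (i : ℕ) < k), G.degree (x i)} := by
  -- x is a bijection onto X
  have hXim : X = Finset.image x Finset.univ := by
    apply (Finset.eq_of_subset_of_card_le ?_ ?_).symm
    · intro v hv; obtain ⟨i, _, rfl⟩ := Finset.mem_image.1 hv; exact hran i
    · rw [Finset.card_image_of_injective _ hinj, Finset.card_univ, Fintype.card_fin, hp]
  -- X is pairwise non-adjacent
  have hXna : ∀ u ∈ X, ∀ v ∈ X, ¬ G.Adj u v := by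
    intro u hu v hv hadj
    rcases hbip u v hadj with ⟨_, hvY⟩ | ⟨huY, _⟩
    · exact (Finset.disjoint_left.1 hdisj hv) hvY
    · exact (Finset.disjoint_left.1 hdisj hu) huY
  -- X covers all edges
  have hXcov : coveredEdges G X = G.edgeFinset := by
    apply Finset.filter_true_of_mem
    intro e he
    induction e with
    | h u v =>
      have hadj : G.Adj u v := SimpleGraph.mem_edgeFinset.1 he
      rcases hbip u v hadj with ⟨huX, _⟩ | ⟨_, hvX⟩
      · exact ⟨u, huX, Sym2.mem_mk_left u v⟩
      · exact ⟨v, hvX, Sym2.mem_mk_right u v⟩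
  have hsumX : ∑ v ∈ X, G.degree v = G.edgeFinset.card := by
    rw [← hXcov, card_coveredEdges_eq G X hXna]
  have hFp : ∑ i ∈ Finset.univ.filter (fun i : Fin p => (i : ℕ) < p), G.degree (x i)
      = ∑ v ∈ X, G.degree v := by
    rw [hXim, Finset.sum_image (fun i _ j _ h => hinj h)]
    apply Finset.sum_congr _ (fun _ _ => rfl)
    apply Finset.filter_true_of_mem
    intro i _
    exact i.isLt
  set K := {k : ℕ |
    t ≤ ∑ i ∈ Finset.univ.filter (fun i : Fin p => (i : ℕ) < k), G.degree (x i)} with hK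
  have hpK : p ∈ K := by rw [hK, Set.mem_setOf_eq, hFp, hsumX]; exact htm
  have hKne : K.Nonempty := ⟨p, hpK⟩
  set k0 := sInf K with hk0
  have hk0K : k0 ∈ K := Nat.sInf_mem hKne
  have hk0p : k0 ≤ p := Nat.sInf_le hpK
  set P := {c | ∃ S : Finset V, S.card = c ∧ t ≤ (coveredEdges G S).card} with hP
  -- upper bound: Pbeta ≤ k0
  have hub : Pbeta G t ≤ k0 := by
    apply Nat.sInf_le
    set S0 : Finset V := Finset.image x (Finset.univ.filter (fun i : Fin p => (i : ℕ) < k0))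
      with hS0
    refine ⟨S0, ?_, ?_⟩
    · rw [hS0, Finset.card_image_of_injective _ hinj]
      have : Finset.univ.filter (fun i : Fin p => (i : ℕ) < k0)
          = Finset.map (Fin.castLEEmb hk0p) Finset.univ := by
        ext i
        simp only [Finset.mem_filter, Finset.mem_univ, true_and, Finset.mem_map,
          Fin.castLEEmb_apply]
        constructor
        · intro hi; exact ⟨⟨(i : ℕ), hi⟩, by ext; rfl⟩
        · rintro ⟨j, rfl⟩; exact j.isLt
      rw [this, Finset.card_map, Finset.card_univ, Fintype.card_fin]
    · have hS0X : ∀ u ∈ S0, u ∈ X := by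
        intro u hu
        obtain ⟨i, _, rfl⟩ := Finset.mem_image.1 hu
        exact hran i
      rw [card_coveredEdges_eq G S0 (fun u hu v hv => hXna u (hS0X u hu) v (hS0X v hv))]
      rw [hS0, Finset.sum_image (fun i _ j _ h => hinj h)]
      exact hk0K
  -- lower bound
  have hPne : P.Nonempty := by
    refine ⟨X.card, X, rfl, ?_⟩
    rw [hXcov]; exact htm
  have hPb : Pbeta G t ∈ P := Nat.sInf_mem hPne
  obtain ⟨S, hScard, hScov⟩ := hPb
  have hlb : k0 ≤ Pbeta G t := by
    by_cases hc : Pbeta G t ≤ p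
    · apply Nat.sInf_le
      rw [hK, Set.mem_setOf_eq]
      calc t ≤ (coveredEdges G S).card := hScov
        _ ≤ ∑ v ∈ S, G.degree v := card_coveredEdges_le G S
        _ ≤ _ := sum_deg_le_aux G X Y hunion hdeg p x hinj hXim hmono _ hc S hScard
    · omega
  omega
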